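/- If F : ℝ² → [0,∞) is an asymmetric norm differentiable away from the origin, then unit-independent vectors u and v form an F-acute angle if and only if u · ∇F(v) ≥ 0 and v · ∇F(u) ≥ 0. -/

import Mathlib

open scoped RealInnerProductSpace

open Filter Set Topology

lemma acute_helper {E : Type*} [NormedAddCommGroup E] [InnerProductSpace ℝ E] [CompleteSpace E]
    (F : E → ℝ) (hconv : ConvexOn ℝ Set.univ F) (x w gx : E)
    (hg : HasGradientAt F gx x) :
    (∀ δ : ℝ, 0 ≤ δ → F x ≤ F (x + δ • w)) ↔ 0 ≤ ⟪gx, w⟫ := by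
  set φ : ℝ → ℝ := fun t => F (x + t • w) with hφdef
  have hline : HasDerivAt (fun t : ℝ => x + t • w) w 0 := by
    simpa using ((hasDerivAt_id (0:ℝ)).smul_const w).const_add x
  have hg'' : HasFDerivAt F ((InnerProductSpace.toDual ℝ E) gx)
      ((fun t : ℝ => x + t • w) 0) := by
    simpa using hasGradientAt_iff_hasFDerivAt.mp hg
  have hφ : HasDerivAt φ ⟪gx, w⟫ 0 := by
    have := hg''.comp_hasDerivAt 0 hline
    simp at this; exact this
  have hφ0 : φ 0 = F x := by simp [hφdef]
  have hφconv : ConvexOn ℝ Set.univ φ := by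
    refine ⟨convex_univ, fun a _ b _ ta tb hta htb hab => ?_⟩
    have h1 : x + (ta * a + tb * b) • w = ta • (x + a • w) + tb • (x + b • w) := by
      calc x + (ta * a + tb * b) • w = (ta + tb) • x + (ta * a + tb * b) • w := by
            rw [hab, one_smul]
        _ = ta • (x + a • w) + tb • (x + b • w) := by module
    calc φ (ta • a + tb • b) = F (ta • (x + a • w) + tb • (x + b • w)) := by
          simp only [hφdef, smul_eq_mul]; rw [h1]
      _ ≤ ta • F (x + a • w) + tb • F (x + b • w) :=
          hconv.2 (mem_univ _) (mem_univ _) hta htb hab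
      _ = ta • φ a + tb • φ b := rfl
  constructor
  · intro h
    have htend : Tendsto (slope φ 0) (𝓝[>] (0:ℝ)) (𝓝 ⟪gx, w⟫) :=
      (hasDerivAt_iff_tendsto_slope.mp hφ).mono_left
        (nhdsWithin_mono _ fun y hy => ne_of_gt hy)
    refine ge_of_tendsto htend ?_
    filter_upwards [self_mem_nhdsWithin] with δ (hδ : (0:ℝ) < δ)
    rw [slope_def_field]
    have := h δ hδ.le
    rw [← hφ0] at this
    have hnum : 0 ≤ φ δ - φ 0 := sub_nonneg.mpr this
    have := div_nonneg hnum (by linarith : (0:ℝ) ≤ δ - 0)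
    simpa [div_eq_inv_mul] using this
  · intro hd δ hδ
    rcases eq_or_lt_of_le hδ with rfl | hδpos
    · simp
    have hslope := hφconv.le_slope_of_hasDerivAt (mem_univ (0:ℝ)) (mem_univ δ) hδpos hφ
    rw [slope_def_field] at hslope
    have h0 : (0:ℝ) ≤ (φ δ - φ 0) / (δ - 0) := le_trans hd hslope
    have : 0 ≤ φ δ - φ 0 := by
      have := mul_nonneg h0 (by linarith : (0:ℝ) ≤ δ - 0)
      rwa [div_mul_cancel₀] at this
      linarith
    rw [← hφ0]
    linarith

/-- If `F : ℝ² → [0,∞)` is an asymmetric norm differentiable away from the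
origin, then linearly independent unit vectors `u` and `v` form an `F`-acute
angle iff `u · ∇F(v) ≥ 0` and `v · ∇F(u) ≥ 0`. -/
theorem acute_iff_gradient (F : EuclideanSpace ℝ (Fin 2) → ℝ)
    (g : EuclideanSpace ℝ (Fin 2) → EuclideanSpace ℝ (Fin 2))
    (hF_nonneg : ∀ a, 0 ≤ F a)
    (hF_subadd : ∀ a b, F (a + b) ≤ F a + F b)
    (hF_homog : ∀ (l : ℝ), 0 ≤ l → ∀ a, F (l • a) = l * F a)
    (hF_posdef : ∀ a, F a = 0 ↔ a = 0)
    (hF_diff : ∀ a : EuclideanSpace ℝ (Fin 2), a ≠ 0 → HasGradientAt F (g a) a)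
    (u v : EuclideanSpace ℝ (Fin 2)) (hu : ‖u‖ = 1) (hv : ‖v‖ = 1)
    (h_indep : LinearIndependent ℝ ![u, v]) :
    (∀ δ : ℝ, 0 ≤ δ → F u ≤ F (u + δ • v) ∧ F v ≤ F (v + δ • u)) ↔
      (0 ≤ ⟪u, g v⟫ ∧ 0 ≤ ⟪v, g u⟫) := by
  have hconv : ConvexOn ℝ Set.univ F := by
    refine ⟨convex_univ, fun a _ b _ ta tb hta htb hab => ?_⟩
    calc F (ta • a + tb • b) ≤ F (ta • a) + F (tb • b) := hF_subadd _ _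
      _ = ta • F a + tb • F b := by
          rw [hF_homog ta hta, hF_homog tb htb]; rfl
  have hune : u ≠ 0 := by intro h; rw [h] at hu; simp at hu
  have hvne : v ≠ 0 := by intro h; rw [h] at hv; simp at hv
  have H1 := acute_helper F hconv u v (g u) (hF_diff u hune)
  have H2 := acute_helper F hconv v u (g v) (hF_diff v hvne)
  rw [real_inner_comm] at H1 H2
  constructor
  · intro h
    exact ⟨H2.mp fun δ hδ => (h δ hδ).2, H1.mp fun δ hδ => (h δ hδ).1⟩
  · intro h δ hδ
    exact ⟨H1.mpr h.2 δ hδ, H2.mpr h.1 δ hδ⟩
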